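/- arXiv:1906.06126 — 3 statements merged into one kernel-verified Lean document; each statement's English description precedes it below -/
import Mathlib

section
/- Fix α > 0 and let 1/z_n = 1 + α (constant fugacity below critical). Then E_{n,z_n}(L_n) → 1/α and var_{n,z_n}(L_n) → (1+α)/α² as n → ∞; moreover L_n + 1 converges in distribution to a geometric random variable with mean 1 + 1/α, i.e. for each integer k ≥ 1, P_{n,z_n}(L_n + 1 = k) → (α/(1+α))·(1+α)^{-(k-1)}. -/
open Filter Finset Real

/-- Number of `k`-step SAWs weight: `(z/n)^k` times the number of walks. -/
noncomputable def sawWeight (n : ℕ) (z : ℝ) (k : ℕ) : ℝ :=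
  (z / n) ^ k * ((n - 1).descFactorial k)

/-- Partition function of the variable-length SAW model on `K_n`. -/
noncomputable def sawZ (n : ℕ) (z : ℝ) : ℝ := ∑ k ∈ Finset.range n, sawWeight n z k

/-- Probability that the walk length equals `k`. -/
noncomputable def sawProb (n : ℕ) (z : ℝ) (k : ℕ) : ℝ := sawWeight n z k / sawZ n z

/-- Mean walk length. -/
noncomputable def sawMean (n : ℕ) (z : ℝ) : ℝ := ∑ k ∈ Finset.range n, (k : ℝ) * sawProb n z k

/-- Variance of the walk length. -/
noncomputable def sawVar (n : ℕ) (z : ℝ) : ℝ :=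
  (∑ k ∈ Finset.range n, (k : ℝ) ^ 2 * sawProb n z k) - (sawMean n z) ^ 2

/-- Tail distribution `P(L_n > x)` for real `x`. -/
noncomputable def sawTail (n : ℕ) (z : ℝ) (x : ℝ) : ℝ :=
  ∑ k ∈ Finset.range n, if x < (k : ℝ) then sawProb n z k else 0

/-- Regularised incomplete gamma function at integer first argument,
    `Q(n, ν) = e^{-ν} ∑_{j<n} ν^j/j!`. -/
noncomputable def Qreg (n : ℕ) (ν : ℝ) : ℝ :=
  Real.exp (-ν) * ∑ j ∈ Finset.range n, ν ^ j / (Nat.factorial j)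

/-- `H_n(ν) = Γ(n) Q(n,ν) / (ν^n e^{-ν})`. -/
noncomputable def Hfun (n : ℕ) (ν : ℝ) : ℝ :=
  Real.Gamma n * Qreg n ν / (ν ^ n * Real.exp (-ν))

/-- Standard normal density. -/
noncomputable def normpdf (x : ℝ) : ℝ := Real.exp (-x ^ 2 / 2) / Real.sqrt (2 * Real.pi)

/-- Standard normal tail distribution `Φ̄`. -/
noncomputable def normTail (x : ℝ) : ℝ := ∫ t in Set.Ioi x, normpdf t

/-- `η(λ) = sgn(λ-1) √(2(λ-1-log λ))`. -/
noncomputable def etaF (l : ℝ) : ℝ := Real.sign (l - 1) * Real.sqrt (2 * (l - 1 - Real.log l))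

/-- `Γ*(n) = √(n/(2π)) e^n n^{-n} Γ(n)`. -/
noncomputable def gammaStar (n : ℕ) : ℝ :=
  Real.sqrt (n / (2 * Real.pi)) * Real.exp n * ((n : ℝ) ^ n)⁻¹ * Real.Gamma n

/-- The operator `(ν d/dν)^l`. -/
noncomputable def thetaOp : ℕ → (ℝ → ℝ) → (ℝ → ℝ)
  | 0, f => f
  | (l + 1), f => fun ν => ν * deriv (thetaOp l f) ν

open Topology

lemma tendsto_sawWeight (z : ℝ) (k : ℕ) :
    Tendsto (fun n : ℕ => sawWeight n z k) atTop (𝓝 (z ^ k)) := by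
  have heq : (fun n : ℕ => z ^ k * ∏ i ∈ range k, (((n : ℝ) - 1 - i) / n))
      =ᶠ[atTop] (fun n : ℕ => sawWeight n z k) := by
    filter_upwards [eventually_ge_atTop (k + 1)] with n hn
    refine Eq.symm ?_
    have hdesc : ((n - 1).descFactorial k : ℝ) = ∏ i ∈ range k, ((n : ℝ) - 1 - i) := by
      rw [Nat.descFactorial_eq_prod_range, Nat.cast_prod]
      refine Finset.prod_congr rfl fun i hi => ?_
      have hi' : i < k := mem_range.mp hi
      have h1 : i ≤ n - 1 := by omega
      have h2 : 1 ≤ n := by omega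
      push_cast [Nat.cast_sub h1, Nat.cast_sub h2]
      ring
    rw [sawWeight, hdesc, Finset.prod_div_distrib, Finset.prod_const, Finset.card_range, div_pow]
    ring
  have hlim : Tendsto (fun n : ℕ => z ^ k * ∏ i ∈ range k, (((n : ℝ) - 1 - i) / n)) atTop
      (𝓝 (z ^ k * ∏ i ∈ range k, (1 : ℝ))) := by
    refine Tendsto.const_mul _ (tendsto_finset_prod _ fun i _ => ?_)
    have h0 : Tendsto (fun n : ℕ => (1 + (i : ℝ)) / n) atTop (𝓝 0) :=
      tendsto_const_div_atTop_nhds_zero_nat _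
    have := (tendsto_const_nhds (x := (1:ℝ))).sub h0
    rw [sub_zero] at this
    refine this.congr' ?_
    filter_upwards [eventually_ge_atTop 1] with n hn
    have hn0 : (n : ℝ) ≠ 0 := by positivity
    field_simp
    ring
  simpa using hlim.congr' heq

lemma tendsto_sum_weight {z : ℝ} (hz0 : 0 ≤ z) (hz1 : z < 1) (c : ℕ → ℝ)
    (hc : ∀ k, 0 ≤ c k) {S : ℝ} (hS : HasSum (fun k => c k * z ^ k) S) :
    Tendsto (fun n : ℕ => ∑ k ∈ range n, c k * sawWeight n z k) atTop (𝓝 S) := by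
  set F : ℕ → ℕ → ℝ := fun n k => if k < n then c k * sawWeight n z k else 0 with hF
  have key : ∀ n : ℕ, ∑ k ∈ range n, c k * sawWeight n z k = ∑' k, F n k := by
    intro n
    rw [tsum_eq_sum (s := range n) (fun b hb => if_neg (by simpa using hb))]
    exact Finset.sum_congr rfl fun k hk => (if_pos (mem_range.mp hk)).symm
  have hw_nonneg : ∀ n k, 0 ≤ sawWeight n z k := by
    intro n k
    apply mul_nonneg (pow_nonneg (by positivity) _) (Nat.cast_nonneg _)
  have hw_le : ∀ n k, k < n → sawWeight n z k ≤ z ^ k := by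
    intro n k hk
    have hn0 : (0 : ℝ) < n := by exact_mod_cast Nat.zero_lt_of_lt hk
    have hd : ((n - 1).descFactorial k : ℝ) ≤ (n : ℝ) ^ k := by
      have : (n - 1).descFactorial k ≤ n ^ k :=
        le_trans (Nat.descFactorial_le_pow _ _) (Nat.pow_le_pow_left (Nat.sub_le n 1) k)
      exact_mod_cast this
    calc (z / n) ^ k * ((n - 1).descFactorial k : ℝ)
        ≤ (z / n) ^ k * (n : ℝ) ^ k := by
          apply mul_le_mul_of_nonneg_left hd (pow_nonneg (by positivity) _)
      _ = z ^ k := by rw [div_pow, div_mul_cancel₀]; positivity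
  have hbound : ∀ n k, ‖F n k‖ ≤ c k * z ^ k := by
    intro n k
    rw [Real.norm_eq_abs, abs_of_nonneg]
    · by_cases h : k < n
      · simp only [hF, if_pos h]
        exact mul_le_mul_of_nonneg_left (hw_le n k h) (hc k)
      · simp only [hF, if_neg h]
        exact mul_nonneg (hc k) (pow_nonneg hz0 k)
    · by_cases h : k < n
      · simp only [hF, if_pos h]; exact mul_nonneg (hc k) (hw_nonneg n k)
      · simp [hF, if_neg h]
  have hpt : ∀ k, Tendsto (fun n => F n k) atTop (𝓝 (c k * z ^ k)) := by
    intro k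
    refine ((tendsto_sawWeight z k).const_mul (c k)).congr' ?_
    filter_upwards [eventually_gt_atTop k] with n hn
    simp [hF, hn]
  have := tendsto_tsum_of_dominated_convergence hS.summable hpt (Eventually.of_forall hbound)
  rw [hS.tsum_eq] at this
  exact this.congr fun n => (key n).symm

theorem high_temp_limits (α : ℝ) (hα : 0 < α) :
    Tendsto (fun n : ℕ => sawMean n (1 / (1 + α))) atTop (nhds (1 / α))
      ∧ Tendsto (fun n : ℕ => sawVar n (1 / (1 + α))) atTop (nhds ((1 + α) / α ^ 2))
      ∧ ∀ k : ℕ, 1 ≤ k →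
          Tendsto (fun n : ℕ => sawProb n (1 / (1 + α)) (k - 1)) atTop
            (nhds ((α / (1 + α)) * ((1 + α) ^ (k - 1))⁻¹)) := by
  have h1α : (0:ℝ) < 1 + α := by linarith
  set z : ℝ := 1 / (1 + α) with hzdef
  have hz0 : 0 ≤ z := by positivity
  have hz1 : z < 1 := by
    rw [hzdef, div_lt_one h1α]; linarith
  have h1z : (0:ℝ) < 1 - z := by linarith
  have h1zα : 1 - z = α / (1 + α) := by
    rw [hzdef]; field_simp; ring
  have hnorm : ‖z‖ < 1 := by rwa [Real.norm_eq_abs, abs_of_nonneg hz0]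
  -- geometric sums
  have hS0 : HasSum (fun k : ℕ => z ^ k) ((1 - z)⁻¹) := by
    simpa using hasSum_geometric_of_lt_one hz0 hz1
  have hS1 : HasSum (fun k : ℕ => (k : ℝ) * z ^ k) (z / (1 - z) ^ 2) :=
    hasSum_coe_mul_geometric_of_norm_lt_one hnorm
  have hC2 := hasSum_choose_mul_geometric_of_norm_lt_one (𝕜 := ℝ) 2 hnorm
  have hC1 := hasSum_choose_mul_geometric_of_norm_lt_one (𝕜 := ℝ) 1 hnorm
  have hS2 : HasSum (fun k : ℕ => (k : ℝ) ^ 2 * z ^ k)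
      (2 * (1 / (1 - z) ^ 3) - 3 * (1 / (1 - z) ^ 2) + (1 - z)⁻¹) := by
    have h := ((hC2.mul_left 2).sub (hC1.mul_left 3)).add hS0
    refine h.congr_fun fun k => ?_
    have : ((k + 2).choose 2 : ℝ) = ((k:ℝ) + 2) * ((k:ℝ) + 1) / 2 := by
      rw [Nat.cast_choose_two]; push_cast; ring
    rw [this]
    push_cast [Nat.choose_one_right]
    ring
  -- limits of the three weighted sums
  have hZ : Tendsto (fun n : ℕ => sawZ n z) atTop (𝓝 ((1 - z)⁻¹)) := by
    have := tendsto_sum_weight hz0 hz1 (fun _ => 1) (fun _ => zero_le_one)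
      (by simpa using hS0)
    refine this.congr fun n => ?_
    simp [sawZ]
  have hM1 : Tendsto (fun n : ℕ => ∑ k ∈ range n, (k : ℝ) * sawWeight n z k) atTop
      (𝓝 (z / (1 - z) ^ 2)) :=
    tendsto_sum_weight hz0 hz1 (fun k => (k : ℝ)) (fun k => Nat.cast_nonneg k) hS1
  have hM2 : Tendsto (fun n : ℕ => ∑ k ∈ range n, (k : ℝ) ^ 2 * sawWeight n z k) atTop
      (𝓝 (2 * (1 / (1 - z) ^ 3) - 3 * (1 / (1 - z) ^ 2) + (1 - z)⁻¹)) :=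
    tendsto_sum_weight hz0 hz1 (fun k => (k : ℝ) ^ 2) (fun k => by positivity) hS2
  have hZne : ((1 - z)⁻¹ : ℝ) ≠ 0 := by positivity
  have hmean_eq : ∀ n, sawMean n z = (∑ k ∈ range n, (k : ℝ) * sawWeight n z k) / sawZ n z := by
    intro n
    simp [sawMean, sawProb, Finset.sum_div, mul_div_assoc]
  have hmean : Tendsto (fun n : ℕ => sawMean n z) atTop (𝓝 (1 / α)) := by
    have := hM1.div hZ hZne
    have hval : z / (1 - z) ^ 2 / (1 - z)⁻¹ = 1 / α := by
      rw [h1zα, hzdef]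
      field_simp
    rw [hval] at this
    exact this.congr fun n => (hmean_eq n).symm
  refine ⟨hmean, ?_, ?_⟩
  · have hm2 : Tendsto (fun n : ℕ => ∑ k ∈ range n, (k : ℝ) ^ 2 * sawProb n z k) atTop
        (𝓝 ((2 * (1 / (1 - z) ^ 3) - 3 * (1 / (1 - z) ^ 2) + (1 - z)⁻¹) / (1 - z)⁻¹)) := by
      refine (hM2.div hZ hZne).congr fun n => ?_
      simp [sawProb, Finset.sum_div, mul_div_assoc]
    have := hm2.sub (hmean.pow 2)
    have hval : (2 * (1 / (1 - z) ^ 3) - 3 * (1 / (1 - z) ^ 2) + (1 - z)⁻¹) / (1 - z)⁻¹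
        - (1 / α) ^ 2 = (1 + α) / α ^ 2 := by
      rw [h1zα]
      field_simp
      ring
    rwa [hval] at this
  · intro k hk
    have hnum := tendsto_sawWeight z (k - 1)
    have := hnum.div hZ hZne
    have hval : z ^ (k - 1) / (1 - z)⁻¹ = (α / (1 + α)) * ((1 + α) ^ (k - 1))⁻¹ := by
      have hane : α ≠ 0 := hα.ne'
      have h1ane : (1 + α) ≠ 0 := h1α.ne'
      rw [h1zα, hzdef, div_pow, one_pow]
      field_simp
    rw [hval] at this
    exact this.congr fun n => rfl
end

section
/- At the critical fugacity z_n = 1, the rescaled walk length L_n/√n converges in distribution to a standard half-normal random variable: for every y ≥ 0, P_{n,1}(L_n > y√n) → Φ̄(y)/Φ̄(0) = 2Φ̄(y), where Φ̄ is the standard normal tail. -/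
open Filter Finset Real

lemma sawWeight_one_zero (n : ℕ) : sawWeight n 1 0 = 1 := by simp [sawWeight]

lemma sawWeight_nonneg (n k : ℕ) : 0 ≤ sawWeight n 1 k := by
  unfold sawWeight; positivity

lemma sum_range_add_one (k : ℕ) :
    ∑ i ∈ Finset.range k, ((i : ℝ) + 1) = k * (k + 1) / 2 := by
  induction k with
  | zero => simp
  | succ k ih => rw [Finset.sum_range_succ, ih]; push_cast; ring

lemma sawWeight_prod (n : ℕ) (hn : 1 ≤ n) :
    ∀ k, k ≤ n - 1 → sawWeight n 1 k = ∏ i ∈ Finset.range k, (1 - ((i : ℝ) + 1) / n) := by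
  intro k
  induction k with
  | zero => intro _; simp [sawWeight]
  | succ k ih =>
    intro hk
    have hk' : k ≤ n - 1 := le_trans (Nat.le_succ k) hk
    have hnpos : (0 : ℝ) < n := by exact_mod_cast hn
    have hne : (n : ℝ) ≠ 0 := ne_of_gt hnpos
    have h2 : (((n - 1 - k : ℕ)) : ℝ) = (n : ℝ) - 1 - k := by
      have hkn : k ≤ n - 1 := hk'
      rw [Nat.cast_sub hkn, Nat.cast_sub hn]; norm_num
    have hstep : sawWeight n 1 (k + 1) = sawWeight n 1 k * (1 - ((k : ℝ) + 1) / n) := by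
      unfold sawWeight
      rw [Nat.descFactorial_succ, Nat.cast_mul, h2, pow_succ]
      field_simp
      ring
    rw [hstep, ih hk', Finset.prod_range_succ]

lemma sawWeight_le (n k : ℕ) (hn : 1 ≤ n) (hk : k ≤ n - 1) :
    sawWeight n 1 k ≤ Real.exp (-(k : ℝ) ^ 2 / (2 * n)) := by
  have hnpos : (0 : ℝ) < n := by exact_mod_cast hn
  rw [sawWeight_prod n hn k hk]
  have hb : ∏ i ∈ Finset.range k, (1 - ((i : ℝ) + 1) / n)
      ≤ ∏ i ∈ Finset.range k, Real.exp (-(((i : ℝ) + 1) / n)) := by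
    apply Finset.prod_le_prod
    · intro i hi
      have hik : i + 1 ≤ n := by
        have := Finset.mem_range.mp hi; omega
      have : ((i : ℝ) + 1) ≤ n := by exact_mod_cast hik
      have : ((i : ℝ) + 1) / n ≤ 1 := by
        rw [div_le_one hnpos]; exact this
      linarith
    · intro i hi
      have := Real.add_one_le_exp (-(((i : ℝ) + 1) / n))
      linarith
  refine le_trans hb ?_
  rw [← Real.exp_sum]
  apply Real.exp_le_exp.mpr
  have h1 : ∑ x ∈ Finset.range k, -(((x : ℝ) + 1) / n)
      = -((k : ℝ) * (k + 1)) / (2 * n) := by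
    rw [Finset.sum_neg_distrib, ← Finset.sum_div, sum_range_add_one]
    ring
  rw [h1, neg_div, neg_div, neg_le_neg_iff]
  gcongr
  nlinarith [Nat.cast_nonneg (α := ℝ) k]

lemma exp_aux {x : ℝ} (h0 : 0 ≤ x) (h2 : 2 * x ≤ 1) :
    Real.exp (-x - 2 * x ^ 2) ≤ 1 - x := by
  have h1 : (0 : ℝ) < 1 - x := by linarith
  rw [← Real.exp_log h1, Real.exp_le_exp]
  have hlog := Real.log_le_sub_one_of_pos (x := (1 - x)⁻¹) (by positivity)
  rw [Real.log_inv] at hlog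
  have key : 1 - (1 - x)⁻¹ ≤ Real.log (1 - x) := by linarith
  refine le_trans ?_ key
  have h3 : (1 - x)⁻¹ ≤ 1 + x + 2 * x ^ 2 := by
    rw [inv_eq_one_div, div_le_iff₀ h1]
    nlinarith
  linarith

lemma sawWeight_ge (n k : ℕ) (hn : 1 ≤ n) (hk : 2 * k ≤ n) :
    Real.exp (-((k : ℝ) * ((k : ℝ) + 1)) / (2 * n) - 2 * (k : ℝ) ^ 3 / (n : ℝ) ^ 2)
      ≤ sawWeight n 1 k := by
  have hk' : k ≤ n - 1 := by omega
  have hnpos : (0 : ℝ) < n := by exact_mod_cast hn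
  rw [sawWeight_prod n hn k hk']
  have hb : ∏ i ∈ Finset.range k, Real.exp (-(((i : ℝ) + 1) / n) - 2 * (((i : ℝ) + 1) / n) ^ 2)
      ≤ ∏ i ∈ Finset.range k, (1 - ((i : ℝ) + 1) / n) := by
    apply Finset.prod_le_prod
    · intro i _; positivity
    · intro i hi
      have hik : 2 * (i + 1) ≤ n := by
        have := Finset.mem_range.mp hi; omega
      have hikR : 2 * ((i : ℝ) + 1) ≤ n := by exact_mod_cast hik
      have hx0 : 0 ≤ ((i : ℝ) + 1) / n := by positivity
      have hx1 : 2 * (((i : ℝ) + 1) / n) ≤ 1 := by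
        rw [← mul_div_assoc, div_le_one hnpos]
        exact hikR
      exact exp_aux hx0 hx1
  refine le_trans ?_ hb
  rw [← Real.exp_sum, Real.exp_le_exp]
  have hsplit : ∑ i ∈ Finset.range k, (-(((i : ℝ) + 1) / n) - 2 * (((i : ℝ) + 1) / n) ^ 2)
      = -((k : ℝ) * ((k : ℝ) + 1)) / (2 * n) - ∑ i ∈ Finset.range k, 2 * (((i : ℝ) + 1) / n) ^ 2 := by
    rw [Finset.sum_sub_distrib, Finset.sum_neg_distrib, ← Finset.sum_div, sum_range_add_one]
    ring
  rw [hsplit]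
  have hterm : ∀ i ∈ Finset.range k, 2 * (((i : ℝ) + 1) / n) ^ 2 ≤ 2 * (k : ℝ) ^ 2 / (n : ℝ) ^ 2 := by
    intro i hi
    have h1 : ((i : ℝ) + 1) ≤ k := by exact_mod_cast Nat.succ_le_of_lt (Finset.mem_range.mp hi)
    have h0 : (0:ℝ) ≤ ((i : ℝ) + 1) := by positivity
    have he : 2 * (((i : ℝ) + 1) / n) ^ 2 = 2 * ((i : ℝ) + 1) ^ 2 / (n : ℝ) ^ 2 := by
      rw [div_pow]; ring
    rw [he]
    gcongr
  have hquad : ∑ i ∈ Finset.range k, 2 * (((i : ℝ) + 1) / n) ^ 2 ≤ 2 * (k : ℝ) ^ 3 / (n : ℝ) ^ 2 := by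
    calc ∑ i ∈ Finset.range k, 2 * (((i : ℝ) + 1) / n) ^ 2
        ≤ ∑ _i ∈ Finset.range k, 2 * (k : ℝ) ^ 2 / (n : ℝ) ^ 2 := Finset.sum_le_sum hterm
      _ = (k : ℝ) * (2 * (k : ℝ) ^ 2 / (n : ℝ) ^ 2) := by
          rw [Finset.sum_const, Finset.card_range, nsmul_eq_mul]
      _ = 2 * (k : ℝ) ^ 3 / (n : ℝ) ^ 2 := by ring
  linarith


lemma ev_sqrt (C : ℝ) : ∀ᶠ (n : ℕ) in atTop, C ≤ Real.sqrt n := by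
  filter_upwards [eventually_ge_atTop ⌈C ^ 2⌉₊] with n hn
  have h1 : (C ^ 2 : ℝ) ≤ n := le_trans (Nat.le_ceil _) (by exact_mod_cast hn)
  calc C ≤ Real.sqrt (C ^ 2) := by
        rw [Real.sqrt_sq_eq_abs]; exact le_abs_self C
    _ ≤ Real.sqrt n := Real.sqrt_le_sqrt h1

lemma tendsto_inv_sqrt : Tendsto (fun n : ℕ => (Real.sqrt n)⁻¹) atTop (nhds 0) := by
  apply Filter.Tendsto.inv_tendsto_atTop
  rw [tendsto_atTop]
  intro b
  exact ev_sqrt b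

lemma eval_step (n : ℕ) (hn : 1 ≤ n) (c : ℕ → ℝ) (t : ℝ) (ht : 0 ≤ t) :
    (∑ k ∈ Finset.range n,
      Set.indicator (Set.Ico ((k : ℝ) / Real.sqrt n) (((k : ℝ) + 1) / Real.sqrt n))
        (fun _ => c k) t)
      = if (⌊t * Real.sqrt n⌋.toNat) < n then c ⌊t * Real.sqrt n⌋.toNat else 0 := by
  have hnR : (0 : ℝ) < n := by exact_mod_cast hn
  have hs : (0 : ℝ) < Real.sqrt n := Real.sqrt_pos.mpr hnR
  set s := Real.sqrt n with hsdef
  have hfl : (0 : ℤ) ≤ ⌊t * s⌋ := Int.floor_nonneg.mpr (by positivity)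
  set K := ⌊t * s⌋.toNat with hK
  have hcastK : (K : ℝ) = ⌊t * s⌋ := by exact_mod_cast Int.toNat_of_nonneg hfl
  have hmem : ∀ j : ℕ, t ∈ Set.Ico ((j : ℝ) / s) (((j : ℝ) + 1) / s) ↔ j = K := by
    intro j
    constructor
    · rintro ⟨h1, h2⟩
      have e1 : (j : ℝ) ≤ t * s := (div_le_iff₀ hs).mp h1
      have e2 : t * s < (j : ℝ) + 1 := by
        have := (lt_div_iff₀ hs).mp h2
        linarith
      have hj : ⌊t * s⌋ = (j : ℤ) := by
        rw [Int.floor_eq_iff]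
        constructor
        · exact_mod_cast e1
        · exact_mod_cast e2
      have : K = (j : ℤ).toNat := by rw [hK, hj]
      simp at this
      omega
    · rintro rfl
      constructor
      · rw [div_le_iff₀ hs, hcastK]
        exact Int.floor_le _
      · rw [lt_div_iff₀ hs, hcastK]
        exact Int.lt_floor_add_one _
  rcases lt_or_ge K n with h | h
  · rw [if_pos h]
    rw [Finset.sum_eq_single_of_mem K (Finset.mem_range.mpr h)]
    · rw [Set.indicator_of_mem ((hmem K).mpr rfl)]
    · intro j _ hne
      exact Set.indicator_of_notMem (fun hm => hne ((hmem j).mp hm)) _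
  · rw [if_neg (not_lt.mpr h)]
    apply Finset.sum_eq_zero
    intro j hj
    have hne : j ≠ K := by
      have := Finset.mem_range.mp hj; omega
    exact Set.indicator_of_notMem (fun hm => hne ((hmem j).mp hm)) _

open MeasureTheory

noncomputable def Fc (y : ℝ) (n k : ℕ) : ℝ :=
  if y * Real.sqrt n < (k : ℝ) then sawWeight n 1 k else 0

noncomputable def Fstep (y : ℝ) (n : ℕ) (t : ℝ) : ℝ :=
  ∑ k ∈ Finset.range n,
    Set.indicator (Set.Ico ((k : ℝ) / Real.sqrt n) (((k : ℝ) + 1) / Real.sqrt n))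
      (fun _ => Fc y n k) t

lemma Fc_nonneg (y : ℝ) (n k : ℕ) : 0 ≤ Fc y n k := by
  unfold Fc; split
  · exact sawWeight_nonneg n k
  · exact le_refl 0

lemma Fstep_nonneg (y : ℝ) (n : ℕ) (t : ℝ) : 0 ≤ Fstep y n t :=
  Finset.sum_nonneg fun k _ => Set.indicator_nonneg (fun _ _ => Fc_nonneg y n k) t

lemma Fstep_meas (y : ℝ) (n : ℕ) : Measurable (Fstep y n) := by
  unfold Fstep
  apply Finset.measurable_sum
  intro k _
  exact measurable_const.indicator measurableSet_Ico

lemma Fstep_integral (y : ℝ) (n : ℕ) :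
    ∫ t, Fstep y n t = (Real.sqrt n)⁻¹ * ∑ k ∈ Finset.range n, Fc y n k := by
  rcases Nat.eq_zero_or_pos n with rfl | hn
  · simp [Fstep]
  have hnR : (0 : ℝ) < n := by exact_mod_cast hn
  have hs : 0 < Real.sqrt n := Real.sqrt_pos.mpr hnR
  have hInt : ∀ k : ℕ, Integrable (Set.indicator
      (Set.Ico ((k : ℝ) / Real.sqrt n) (((k : ℝ) + 1) / Real.sqrt n)) (fun _ => Fc y n k)) := by
    intro k
    rw [integrable_indicator_iff measurableSet_Ico]
    apply (integrableOn_const_iff (C := Fc y n k)).mpr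
    right
    rw [Real.volume_Ico]
    exact ENNReal.ofReal_lt_top
  unfold Fstep
  rw [integral_finset_sum _ (fun k _ => hInt k), Finset.mul_sum]
  apply Finset.sum_congr rfl
  intro k _
  rw [integral_indicator_const _ measurableSet_Ico, Real.volume_real_Ico]
  have he : ((k : ℝ) + 1) / Real.sqrt n - (k : ℝ) / Real.sqrt n = (Real.sqrt n)⁻¹ := by
    field_simp
    ring
  rw [he, max_eq_left (by positivity), smul_eq_mul]

lemma K_facts (t : ℝ) (ht : 0 ≤ t) (n : ℕ) :
    ((⌊t * Real.sqrt n⌋.toNat : ℕ) : ℝ) ≤ t * Real.sqrt n ∧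
      t * Real.sqrt n - 1 < ((⌊t * Real.sqrt n⌋.toNat : ℕ) : ℝ) := by
  have hfl : (0 : ℤ) ≤ ⌊t * Real.sqrt n⌋ :=
    Int.floor_nonneg.mpr (mul_nonneg ht (Real.sqrt_nonneg _))
  have hcast : ((⌊t * Real.sqrt n⌋.toNat : ℕ) : ℝ) = (⌊t * Real.sqrt n⌋ : ℝ) := by
    exact_mod_cast Int.toNat_of_nonneg hfl
  rw [hcast]
  exact ⟨Int.floor_le _, by linarith [Int.lt_floor_add_one (t * Real.sqrt n)]⟩

lemma Fstep_le_bound (y : ℝ) (hy : 0 ≤ y) (n : ℕ) (t : ℝ) :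
    ‖Fstep y n t‖ ≤ Set.indicator (Set.Ioi (0 : ℝ)) (fun t => Real.exp (t - t ^ 2 / 2)) t := by
  have hbnn : 0 ≤ Set.indicator (Set.Ioi (0 : ℝ)) (fun t => Real.exp (t - t ^ 2 / 2)) t :=
    Set.indicator_nonneg (fun x _ => (Real.exp_pos _).le) t
  rw [Real.norm_eq_abs, abs_of_nonneg (Fstep_nonneg y n t)]
  rcases Nat.eq_zero_or_pos n with rfl | hn
  · simpa [Fstep] using hbnn
  have hnR : (0 : ℝ) < n := by exact_mod_cast hn
  have hs : 0 < Real.sqrt n := Real.sqrt_pos.mpr hnR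
  have hs1 : 1 ≤ Real.sqrt n := by
    rw [show (1 : ℝ) = Real.sqrt 1 by simp]
    exact Real.sqrt_le_sqrt (by exact_mod_cast hn)
  rcases le_or_gt t 0 with ht | ht
  · have h0 : Fstep y n t = 0 := by
      apply Finset.sum_eq_zero
      intro k _
      by_cases hm : t ∈ Set.Ico ((k : ℝ) / Real.sqrt n) (((k : ℝ) + 1) / Real.sqrt n)
      · rw [Set.indicator_of_mem hm]
        have h1 : (k : ℝ) ≤ t * Real.sqrt n := (div_le_iff₀ hs).mp hm.1
        have h2 : t * Real.sqrt n ≤ 0 := mul_nonpos_of_nonpos_of_nonneg ht hs.le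
        have h3 : 0 ≤ y * Real.sqrt n := mul_nonneg hy hs.le
        unfold Fc
        rw [if_neg (not_lt.mpr (by linarith))]
      · rw [Set.indicator_of_notMem hm]
    rw [h0]; exact hbnn
  · rw [Set.indicator_of_mem (Set.mem_Ioi.mpr ht)]
    unfold Fstep
    rw [eval_step n hn (Fc y n) t ht.le]
    split_ifs with hKn
    · set K := ⌊t * Real.sqrt n⌋.toNat with hKdef
      have hW : sawWeight n 1 K ≤ Real.exp (-(K : ℝ) ^ 2 / (2 * n)) :=
        sawWeight_le n K hn (by omega)
      have hFc : Fc y n K ≤ Real.exp (-(K : ℝ) ^ 2 / (2 * n)) := by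
        unfold Fc; split
        · exact hW
        · exact (Real.exp_pos _).le
      refine le_trans hFc (Real.exp_le_exp.mpr ?_)
      obtain ⟨hKle, hKgt⟩ := K_facts t ht.le n
      have hK0 : (0 : ℝ) ≤ (K : ℝ) := Nat.cast_nonneg K
      have hn2 : (n : ℝ) = Real.sqrt n ^ 2 := (Real.sq_sqrt hnR.le).symm
      set s := Real.sqrt n
      rw [hn2]
      rcases le_or_gt 1 (t * s) with hts | hts
      · have h1 : (t * s - 1) ^ 2 ≤ (K : ℝ) ^ 2 := by nlinarith
        rw [div_le_iff₀ (by positivity : (0 : ℝ) < 2 * s ^ 2)]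
        nlinarith [mul_nonneg (mul_nonneg ht.le hs.le) (sub_nonneg.mpr hs1)]
      · have htlt : t < 1 := by nlinarith
        have hL : -(K : ℝ) ^ 2 / (2 * s ^ 2) ≤ 0 := by
          rw [neg_div]
          have : 0 ≤ (K : ℝ) ^ 2 / (2 * s ^ 2) := by positivity
          linarith
        nlinarith
    · exact (Real.exp_pos _).le

lemma Fstep_tendsto (y : ℝ) (hy : 0 ≤ y) (t : ℝ) (hne : t ≠ y) :
    Tendsto (fun n : ℕ => Fstep y n t) atTop
      (nhds (Set.indicator (Set.Ioi y) (fun u => Real.exp (-u ^ 2 / 2)) t)) := by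
  rcases lt_or_gt_of_ne hne with hlt | hgt
  · rw [Set.indicator_of_notMem (by simp only [Set.mem_Ioi, not_lt]; linarith)]
    apply Tendsto.congr' _ tendsto_const_nhds
    filter_upwards [eventually_ge_atTop 1] with n hn
    have hnR : (0 : ℝ) < n := by exact_mod_cast hn
    have hs : 0 < Real.sqrt n := Real.sqrt_pos.mpr hnR
    symm
    apply Finset.sum_eq_zero
    intro k _
    by_cases hm : t ∈ Set.Ico ((k : ℝ) / Real.sqrt n) (((k : ℝ) + 1) / Real.sqrt n)
    · rw [Set.indicator_of_mem hm]
      have h1 : (k : ℝ) ≤ t * Real.sqrt n := (div_le_iff₀ hs).mp hm.1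
      have h2 : t * Real.sqrt n < y * Real.sqrt n := by nlinarith
      unfold Fc
      rw [if_neg (not_lt.mpr (by linarith))]
    · rw [Set.indicator_of_notMem hm]
  · have ht : 0 < t := lt_of_le_of_lt hy hgt
    have hty : 0 < t - y := sub_pos.mpr hgt
    rw [Set.indicator_of_mem (Set.mem_Ioi.mpr hgt)]
    set K : ℕ → ℕ := fun n => ⌊t * Real.sqrt n⌋.toNat with hKdef
    have hev : ∀ᶠ n : ℕ in atTop,
        1 ≤ n ∧ K n < n ∧ y * Real.sqrt n < (K n : ℝ) ∧ 2 * K n ≤ n := by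
      filter_upwards [ev_sqrt (max (t + 1) (max (2 * t + 2) ((t - y)⁻¹ + 1))),
        eventually_ge_atTop 1] with n hsC hn1
      have hnR : (0 : ℝ) < n := by exact_mod_cast hn1
      have hs : 0 < Real.sqrt n := Real.sqrt_pos.mpr hnR
      set s := Real.sqrt n with hsdef
      have hn2 : (n : ℝ) = s ^ 2 := (Real.sq_sqrt hnR.le).symm
      have hc1 : t + 1 ≤ s := le_trans (le_max_left _ _) hsC
      have hc2 : 2 * t + 2 ≤ s := le_trans (le_trans (le_max_left _ _) (le_max_right _ _)) hsC
      have hc3 : (t - y)⁻¹ + 1 ≤ s := le_trans (le_trans (le_max_right _ _) (le_max_right _ _)) hsC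
      obtain ⟨hKle, hKgt⟩ := K_facts t ht.le n
      refine ⟨hn1, ?_, ?_, ?_⟩
      · have : (K n : ℝ) < (n : ℝ) := by nlinarith
        exact_mod_cast this
      · have hinv : (t - y) * (t - y)⁻¹ = 1 := mul_inv_cancel₀ hty.ne'
        nlinarith
      · have : ((2 * K n : ℕ) : ℝ) ≤ (n : ℝ) := by push_cast; nlinarith
        exact_mod_cast this
    have hr : Tendsto (fun n : ℕ => (K n : ℝ) / Real.sqrt n) atTop (nhds t) := by
      have hlow : Tendsto (fun n : ℕ => t - (Real.sqrt n)⁻¹) atTop (nhds t) := by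
        have := tendsto_const_nhds (x := t) (f := atTop (α := ℕ)) |>.sub tendsto_inv_sqrt
        simpa using this
      apply tendsto_of_tendsto_of_tendsto_of_le_of_le' hlow tendsto_const_nhds
      · filter_upwards [eventually_ge_atTop 1] with n hn1
        have hnR : (0 : ℝ) < n := by exact_mod_cast hn1
        have hs : 0 < Real.sqrt n := Real.sqrt_pos.mpr hnR
        obtain ⟨hKle, hKgt⟩ := K_facts t ht.le n
        rw [le_div_iff₀ hs]
        have hinv : (Real.sqrt n)⁻¹ * Real.sqrt n = 1 := inv_mul_cancel₀ hs.ne'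
        nlinarith
      · filter_upwards [eventually_ge_atTop 1] with n hn1
        have hnR : (0 : ℝ) < n := by exact_mod_cast hn1
        have hs : 0 < Real.sqrt n := Real.sqrt_pos.mpr hnR
        obtain ⟨hKle, hKgt⟩ := K_facts t ht.le n
        rw [div_le_iff₀ hs]
        linarith
    have hup : Tendsto (fun n : ℕ => Real.exp (-(K n : ℝ) ^ 2 / (2 * n))) atTop
        (nhds (Real.exp (-t ^ 2 / 2))) := by
      have h1 : Tendsto (fun n : ℕ => -((K n : ℝ) / Real.sqrt n) ^ 2 / 2) atTop
          (nhds (-t ^ 2 / 2)) := ((hr.pow 2).neg).div_const 2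
      have h2 := (Real.continuous_exp.tendsto _).comp h1
      apply h2.congr'
      filter_upwards [eventually_ge_atTop 1] with n hn1
      have hnR : (0 : ℝ) < n := by exact_mod_cast hn1
      simp only [Function.comp_apply]
      congr 1
      rw [div_pow, Real.sq_sqrt hnR.le]
      ring
    have hlowlim : Tendsto (fun n : ℕ =>
        Real.exp (-((K n : ℝ) * ((K n : ℝ) + 1)) / (2 * n) - 2 * (K n : ℝ) ^ 3 / (n : ℝ) ^ 2))
        atTop (nhds (Real.exp (-t ^ 2 / 2))) := by
      have h1 : Tendsto (fun n : ℕ =>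
          -(((K n : ℝ) / Real.sqrt n) * ((K n : ℝ) / Real.sqrt n + (Real.sqrt n)⁻¹)) / 2
            - 2 * ((K n : ℝ) / Real.sqrt n) ^ 3 * (Real.sqrt n)⁻¹) atTop
          (nhds (-(t * (t + 0)) / 2 - 2 * t ^ 3 * 0)) := by
        exact (((hr.mul (hr.add tendsto_inv_sqrt)).neg.div_const 2).sub
          (((hr.pow 3).const_mul 2).mul tendsto_inv_sqrt))
      have h1' : -(t * (t + 0)) / 2 - 2 * t ^ 3 * 0 = -t ^ 2 / 2 := by ring
      rw [h1'] at h1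
      have h2 := (Real.continuous_exp.tendsto _).comp h1
      apply h2.congr'
      filter_upwards [eventually_ge_atTop 1] with n hn1
      have hnR : (0 : ℝ) < n := by exact_mod_cast hn1
      have hs : 0 < Real.sqrt n := Real.sqrt_pos.mpr hnR
      simp only [Function.comp_apply]
      congr 1
      have hn2 : (n : ℝ) = Real.sqrt n ^ 2 := (Real.sq_sqrt hnR.le).symm
      conv_lhs => rw [hn2]
      have h4 : Real.sqrt n ^ 4 = (n : ℝ) ^ 2 := by
        rw [(by norm_num : 4 = 2 * 2), pow_mul, Real.sq_sqrt hnR.le]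
      have h4' : Real.sqrt n ^ 3 * Real.sqrt n = (n : ℝ) ^ 2 := by
        rw [← pow_succ]; exact h4
      field_simp
      rw [Real.sqrt_sq hs.le, h4, ← hn2]
      ring
    have hWlim : Tendsto (fun n : ℕ => sawWeight n 1 (K n)) atTop
        (nhds (Real.exp (-t ^ 2 / 2))) := by
      apply tendsto_of_tendsto_of_tendsto_of_le_of_le' hlowlim hup
      · filter_upwards [hev] with n hn
        obtain ⟨hn1, hKn, hyK, h2K⟩ := hn
        exact sawWeight_ge n (K n) hn1 h2K
      · filter_upwards [hev] with n hn
        obtain ⟨hn1, hKn, hyK, h2K⟩ := hn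
        exact sawWeight_le n (K n) hn1 (by omega)
    apply hWlim.congr'
    filter_upwards [hev] with n hn
    obtain ⟨hn1, hKn, hyK, h2K⟩ := hn
    unfold Fstep
    rw [eval_step n hn1 (Fc y n) t ht.le, if_pos hKn]
    unfold Fc
    rw [if_pos hyK]

lemma tendsto_scaled_tail (y : ℝ) (hy : 0 ≤ y) :
    Tendsto (fun n : ℕ => (Real.sqrt n)⁻¹ * ∑ k ∈ Finset.range n, Fc y n k) atTop
      (nhds (∫ t in Set.Ioi y, Real.exp (-t ^ 2 / 2))) := by
  have hbound_int : Integrable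
      (Set.indicator (Set.Ioi (0 : ℝ)) (fun t => Real.exp (t - t ^ 2 / 2))) := by
    have h1 : Integrable (fun t : ℝ => Real.exp (1 / 2) * Real.exp (-(1 / 2) * (t - 1) ^ 2)) :=
      ((integrable_exp_neg_mul_sq (by norm_num : (0 : ℝ) < 1 / 2)).comp_sub_right 1).const_mul _
    have h2 : (fun t : ℝ => Real.exp (t - t ^ 2 / 2))
        = fun t => Real.exp (1 / 2) * Real.exp (-(1 / 2) * (t - 1) ^ 2) := by
      funext t; rw [← Real.exp_add]; ring_nf
    exact (h2 ▸ h1).indicator measurableSet_Ioi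
  have hae : ∀ᵐ (t : ℝ), t ≠ y := by
    have h0 : volume ({y} : Set ℝ) = 0 := Real.volume_singleton
    rw [ae_iff]
    convert h0 using 2
    simp only [ne_eq, not_not, Set.setOf_eq_eq_singleton]
  have h := MeasureTheory.tendsto_integral_of_dominated_convergence
    (F := fun n => Fstep y n)
    (f := Set.indicator (Set.Ioi y) fun u => Real.exp (-u ^ 2 / 2))
    (Set.indicator (Set.Ioi (0 : ℝ)) fun t => Real.exp (t - t ^ 2 / 2))
    (fun n => (Fstep_meas y n).aestronglyMeasurable)
    hbound_int
    (fun n => Filter.Eventually.of_forall (Fstep_le_bound y hy n))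
    (by filter_upwards [hae] with t ht using Fstep_tendsto y hy t ht)
  rw [integral_indicator measurableSet_Ioi] at h
  exact h.congr (fun n => Fstep_integral y n)

lemma sawZ_pos (n : ℕ) (hn : 1 ≤ n) : 0 < sawZ n 1 := by
  have h0 : (0 : ℕ) ∈ Finset.range n := Finset.mem_range.mpr hn
  have h := Finset.single_le_sum (f := fun k => sawWeight n 1 k)
    (fun k _ => sawWeight_nonneg n k) h0
  rw [sawWeight_one_zero n] at h
  unfold sawZ; linarith

lemma sawZ_decomp (n : ℕ) (hn : 1 ≤ n) :
    sawZ n 1 = 1 + ∑ k ∈ Finset.range n, Fc 0 n k := by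
  unfold sawZ
  have hsplit : ∀ k ∈ Finset.range n, sawWeight n 1 k
      = Fc 0 n k + (if (0 : ℝ) * Real.sqrt n < (k : ℝ) then 0 else sawWeight n 1 k) := by
    intro k _
    unfold Fc
    split <;> simp
  rw [Finset.sum_congr rfl hsplit, Finset.sum_add_distrib]
  have h2 : ∑ k ∈ Finset.range n,
      (if (0 : ℝ) * Real.sqrt n < (k : ℝ) then 0 else sawWeight n 1 k) = 1 := by
    rw [Finset.sum_eq_single_of_mem 0 (Finset.mem_range.mpr hn)]
    · rw [if_neg (by simp)]
      exact sawWeight_one_zero n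
    · intro b _ hb
      rw [if_pos (by rw [zero_mul]; exact_mod_cast Nat.pos_of_ne_zero hb)]
  rw [h2]; ring

theorem critical_half_normal (y : ℝ) (hy : 0 ≤ y) :
    Tendsto (fun n : ℕ => sawTail n 1 (y * Real.sqrt n)) atTop
      (nhds (2 * normTail y)) := by
  have hpi : (0 : ℝ) < Real.sqrt (2 * π) := Real.sqrt_pos.mpr (by positivity)
  have hI0 : (∫ t in Set.Ioi (0 : ℝ), Real.exp (-t ^ 2 / 2)) = Real.sqrt (2 * π) / 2 := by
    have h := integral_gaussian_Ioi (1 / 2)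
    simp_rw [show ∀ t : ℝ, -t ^ 2 / 2 = -(1 / 2) * t ^ 2 from fun t => by ring]
    rw [h]
    rw [show π / (1 / 2) = 2 * π by ring]
  have hA := tendsto_scaled_tail y hy
  have hA0 := tendsto_scaled_tail 0 le_rfl
  have hB : Tendsto (fun n : ℕ => (Real.sqrt n)⁻¹ * sawZ n 1) atTop
      (nhds (∫ t in Set.Ioi (0 : ℝ), Real.exp (-t ^ 2 / 2))) := by
    have h1 := tendsto_inv_sqrt.add hA0
    rw [zero_add] at h1
    apply h1.congr'
    filter_upwards [eventually_ge_atTop 1] with n hn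
    rw [sawZ_decomp n hn]
    ring
  have hI0ne : (∫ t in Set.Ioi (0 : ℝ), Real.exp (-t ^ 2 / 2)) ≠ 0 := by
    rw [hI0]; positivity
  have hfin := hA.div hB hI0ne
  have heq : (fun n : ℕ => ((Real.sqrt n)⁻¹ * ∑ k ∈ Finset.range n, Fc y n k)
        / ((Real.sqrt n)⁻¹ * sawZ n 1))
      =ᶠ[atTop] fun n : ℕ => sawTail n 1 (y * Real.sqrt n) := by
    filter_upwards [eventually_ge_atTop 1] with n hn
    have hnR : (0 : ℝ) < n := by exact_mod_cast hn
    have hs : 0 < Real.sqrt n := Real.sqrt_pos.mpr hnR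
    have h1 : sawTail n 1 (y * Real.sqrt n)
        = (∑ k ∈ Finset.range n, Fc y n k) / sawZ n 1 := by
      unfold sawTail sawProb Fc
      rw [Finset.sum_div]
      apply Finset.sum_congr rfl
      intro k _
      split
      · rfl
      · exact (zero_div _).symm
    rw [h1, mul_div_mul_left _ _ (inv_ne_zero hs.ne')]
  have hres := hfin.congr' heq
  have hval : (∫ t in Set.Ioi y, Real.exp (-t ^ 2 / 2))
      / (∫ t in Set.Ioi (0 : ℝ), Real.exp (-t ^ 2 / 2)) = 2 * normTail y := by
    rw [hI0]
    have hnt : normTail y = (∫ t in Set.Ioi y, Real.exp (-t ^ 2 / 2)) / Real.sqrt (2 * π) := by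
      unfold normTail normpdf
      exact integral_div _ _
    rw [hnt]
    field_simp
  rw [hval] at hres
  exact hres
end

section
/- Fix α > 0 and β ∈ (0,1/2), and let 1/z_n = 1 + α n^{-β}. Then α L_n/n^β converges in distribution to an exponential random variable of mean 1: for every y ≥ 0, P_{n,z_n}(L_n > y n^β/α) → e^{-y}. -/
open Filter Finset Real

lemma descFactorial_lower (n : ℕ) : ∀ k : ℕ, k < n →
    (n : ℝ) ^ (k + 1) - (k : ℝ) ^ 2 * (n : ℝ) ^ k ≤ (n : ℝ) * ((n - 1).descFactorial k) := by
  intro k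
  induction k with
  | zero => intro h; simp
  | succ k ih =>
    intro h
    have hk : k < n := Nat.lt_of_succ_lt h
    have ih' := ih hk
    have hkn : k ≤ n - 1 := by omega
    have hcast : (((n - 1) - k : ℕ) : ℝ) = (n : ℝ) - 1 - k := by
      have h1 : (1:ℕ) ≤ n := by omega
      rw [Nat.cast_sub hkn, Nat.cast_sub h1]; norm_num
    rw [Nat.descFactorial_succ, Nat.cast_mul, hcast]
    have hN : (1:ℝ) ≤ (n:ℝ) := by exact_mod_cast Nat.one_le_iff_ne_zero.2 (by omega)
    have hfac : (0:ℝ) ≤ (n:ℝ) - 1 - k := by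
      have : (k:ℝ) + 1 + 1 ≤ (n:ℝ) + 1 := by exact_mod_cast Nat.succ_le_of_lt h |>.trans (Nat.le_succ n)
      linarith
    have hmul := mul_le_mul_of_nonneg_left ih' hfac
    have hp : (0:ℝ) < (n:ℝ) ^ k := pow_pos (by linarith) k
    have hK : (0:ℝ) ≤ (k:ℝ) := Nat.cast_nonneg k
    push_cast
    have e1 : (n:ℝ) ^ (k + 1) = (n:ℝ) * (n:ℝ) ^ k := by ring
    have e2 : (n:ℝ) ^ (k + 1 + 1) = (n:ℝ) * (n:ℝ) * (n:ℝ) ^ k := by ring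
    nlinarith [hmul, e1, e2, mul_nonneg (mul_nonneg hK hK) hp.le,
      mul_nonneg (mul_nonneg (mul_nonneg hK hK) hK) hp.le,
      mul_nonneg (mul_nonneg hK (by linarith : (0:ℝ) ≤ (n:ℝ))) hp.le]

lemma sq_geom_sum_le {r : ℝ} (h0 : 0 ≤ r) (h1 : r < 1) (s : Finset ℕ) :
    ∑ k ∈ s, (k : ℝ) ^ 2 * r ^ k ≤ 2 / (1 - r) ^ 3 := by
  have hr : ‖r‖ < 1 := by rwa [Real.norm_eq_abs, abs_of_nonneg h0]
  have hs := hasSum_choose_mul_geometric_of_norm_lt_one (𝕜 := ℝ) 2 hr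
  have h2 : ∀ k : ℕ, (k : ℝ) ^ 2 * r ^ k ≤ 2 * (((k + 2).choose 2 : ℝ) * r ^ k) := by
    intro k
    have hc : ((k + 2).choose 2 : ℝ) = (k + 2) * (k + 1) / 2 := by
      rw [Nat.cast_choose_two]; push_cast; ring
    have hp : (0:ℝ) ≤ r ^ k := pow_nonneg h0 k
    have hk : (0:ℝ) ≤ (k:ℝ) := Nat.cast_nonneg k
    rw [hc]; nlinarith [mul_nonneg hk hp]
  calc ∑ k ∈ s, (k : ℝ) ^ 2 * r ^ k
      ≤ ∑ k ∈ s, 2 * (((k + 2).choose 2 : ℝ) * r ^ k) := Finset.sum_le_sum fun k _ => h2 k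
    _ = 2 * ∑ k ∈ s, ((k + 2).choose 2 : ℝ) * r ^ k := by rw [Finset.mul_sum]
    _ ≤ 2 * (1 / (1 - r) ^ (2 + 1)) := by
        gcongr
        exact Summable.sum_le_tsum s (fun k _ => by positivity) hs.summable |>.trans_eq hs.tsum_eq
    _ = 2 / (1 - r) ^ 3 := by ring

lemma tail_sandwich (n m : ℕ) (r x : ℝ) (hn : 1 ≤ n) (hr0 : 0 < r) (hr1 : r < 1)
    (hx : 0 ≤ x) (hm : m = Nat.floor x + 1) (hmn : m < n) :
    (r ^ m - r ^ n - 2 / ((n:ℝ) * (1 - r) ^ 2) ≤ sawTail n r x) ∧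
    (0 < 1 - r ^ n - 2 / ((n:ℝ) * (1 - r) ^ 2) →
      sawTail n r x ≤ r ^ m / (1 - r ^ n - 2 / ((n:ℝ) * (1 - r) ^ 2))) := by
  have hN : (0:ℝ) < (n:ℝ) := by exact_mod_cast hn
  have h1r : (0:ℝ) < 1 - r := by linarith
  set N : ℝ := (n:ℝ) with hNdef
  set V : ℝ := 2 / (1 - r) ^ 3 with hV
  set ε : ℝ := 2 / (N * (1 - r) ^ 2) with hε
  have hεV : ε = (1 - r) * V / N := by
    rw [hε, hV]; field_simp
  -- weight bounds
  have hW0 : ∀ k, 0 ≤ sawWeight n r k := by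
    intro k; unfold sawWeight; positivity
  have hWle : ∀ k : ℕ, sawWeight n r k ≤ r ^ k := by
    intro k
    have hD : ((n - 1).descFactorial k : ℝ) ≤ N ^ k := by
      have h1 : (n - 1).descFactorial k ≤ (n - 1) ^ k := Nat.descFactorial_le_pow _ _
      have h2 : (n - 1) ^ k ≤ n ^ k := Nat.pow_le_pow_left (Nat.sub_le n 1) k
      have h3 := h1.trans h2
      rw [hNdef]; exact_mod_cast h3
    unfold sawWeight
    calc (r / N) ^ k * ((n - 1).descFactorial k : ℝ) ≤ (r / N) ^ k * N ^ k := by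
          gcongr
      _ = r ^ k := by rw [div_pow, div_mul_cancel₀]; positivity
  have hWge : ∀ k < n, r ^ k - (k:ℝ) ^ 2 * r ^ k / N ≤ sawWeight n r k := by
    intro k hk
    have h0 : N ^ k * N - (k:ℝ) ^ 2 * N ^ k ≤ N * ((n - 1).descFactorial k) := by
      have := descFactorial_lower n k hk
      rwa [pow_succ] at this
    have hNk : (0:ℝ) < N ^ k := pow_pos hN k
    have key : (r ^ k * N - (k:ℝ) ^ 2 * r ^ k) / N
        ≤ r ^ k * ((n - 1).descFactorial k : ℝ) / N ^ k := by
      rw [div_le_div_iff₀ hN hNk]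
      have hrk : (0:ℝ) ≤ r ^ k := by positivity
      nlinarith [mul_le_mul_of_nonneg_left h0 hrk]
    have e1 : r ^ k - (k:ℝ) ^ 2 * r ^ k / N = (r ^ k * N - (k:ℝ) ^ 2 * r ^ k) / N := by
      field_simp
    have e2 : sawWeight n r k = r ^ k * ((n - 1).descFactorial k : ℝ) / N ^ k := by
      unfold sawWeight; rw [div_pow]; ring
    rw [e1, e2]; exact key
  -- geometric sums
  have hgeom : ∀ a b : ℕ, a ≤ b → ∑ k ∈ Finset.Ico a b, r ^ k = (r ^ a - r ^ b) / (1 - r) := by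
    intro a b hab
    rw [geom_sum_Ico (ne_of_lt hr1) hab, div_eq_div_iff (by linarith) (by linarith)]; ring
  -- Z bounds
  have hZ1 : 1 ≤ sawZ n r := by
    have h0 : sawWeight n r 0 = 1 := by unfold sawWeight; simp
    have := Finset.single_le_sum (f := fun k => sawWeight n r k) (fun k _ => hW0 k)
      (Finset.mem_range.2 (by omega : 0 < n))
    unfold sawZ; simpa [h0] using this
  have hZ0 : 0 < sawZ n r := lt_of_lt_of_le one_pos hZ1
  have hrange : ∑ k ∈ Finset.range n, r ^ k = (1 - r ^ n) / (1 - r) := by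
    have := hgeom 0 n (Nat.zero_le n)
    rw [Finset.range_eq_Ico]; simpa using this
  have hZub : sawZ n r ≤ 1 / (1 - r) := by
    unfold sawZ
    calc ∑ k ∈ Finset.range n, sawWeight n r k ≤ ∑ k ∈ Finset.range n, r ^ k :=
          Finset.sum_le_sum fun k _ => hWle k
      _ = (1 - r ^ n) / (1 - r) := hrange
      _ ≤ 1 / (1 - r) := by gcongr <;> linarith [pow_nonneg hr0.le n]
  have hZlb : (1 - r ^ n) / (1 - r) - V / N ≤ sawZ n r := by
    have h1 : ∑ k ∈ Finset.range n, (r ^ k - (k:ℝ) ^ 2 * r ^ k / N) ≤ sawZ n r :=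
      Finset.sum_le_sum fun k hk => hWge k (Finset.mem_range.1 hk)
    have h2 : ∑ k ∈ Finset.range n, (r ^ k - (k:ℝ) ^ 2 * r ^ k / N)
        = (1 - r ^ n) / (1 - r) - (∑ k ∈ Finset.range n, (k:ℝ) ^ 2 * r ^ k) / N := by
      rw [Finset.sum_sub_distrib, hrange, ← Finset.sum_div]
    have h3 : (∑ k ∈ Finset.range n, (k:ℝ) ^ 2 * r ^ k) / N ≤ V / N := by
      gcongr
      exact sq_geom_sum_le hr0.le hr1 _
    linarith [h2 ▸ h1]
  -- tail formula
  have hTiff : ∀ k : ℕ, (x < (k:ℝ)) ↔ (m ≤ k) := by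
    intro k
    rw [hm, Nat.add_one_le_iff, Nat.floor_lt hx]
  set T : ℝ := ∑ k ∈ Finset.Ico m n, sawWeight n r k with hT
  have hTail : sawTail n r x = T / sawZ n r := by
    unfold sawTail sawProb
    have e : ∀ k : ℕ, (if x < (k:ℝ) then sawWeight n r k / sawZ n r else 0)
        = (if x < (k:ℝ) then sawWeight n r k else 0) / sawZ n r := by
      intro k; split <;> simp
    rw [Finset.sum_congr rfl (fun k _ => e k), ← Finset.sum_div]
    congr 1
    rw [Finset.range_eq_Ico, ← Finset.sum_Ico_consecutive _ (Nat.zero_le m) (le_of_lt hmn)]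
    have hfirst : ∑ k ∈ Finset.Ico 0 m, (if x < (k:ℝ) then sawWeight n r k else 0) = 0 := by
      refine Finset.sum_eq_zero fun k hk => ?_
      rw [if_neg]
      rw [hTiff]
      exact Nat.not_le.2 (Finset.mem_Ico.1 hk).2
    have hsecond : ∑ k ∈ Finset.Ico m n, (if x < (k:ℝ) then sawWeight n r k else 0) = T := by
      refine Finset.sum_congr rfl fun k hk => ?_
      rw [if_pos ((hTiff k).2 (Finset.mem_Ico.1 hk).1)]
    rw [hfirst, hsecond, zero_add]
  have hT0 : 0 ≤ T := Finset.sum_nonneg fun k _ => hW0 k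
  have hTub : T ≤ (r ^ m - r ^ n) / (1 - r) := by
    rw [hT, ← hgeom m n (le_of_lt hmn)]
    exact Finset.sum_le_sum fun k _ => hWle k
  have hTlb : (r ^ m - r ^ n) / (1 - r) - V / N ≤ T := by
    have h1 : ∑ k ∈ Finset.Ico m n, (r ^ k - (k:ℝ) ^ 2 * r ^ k / N) ≤ T :=
      Finset.sum_le_sum fun k hk => hWge k (Finset.mem_Ico.1 hk).2
    have h2 : ∑ k ∈ Finset.Ico m n, (r ^ k - (k:ℝ) ^ 2 * r ^ k / N)
        = (r ^ m - r ^ n) / (1 - r) - (∑ k ∈ Finset.Ico m n, (k:ℝ) ^ 2 * r ^ k) / N := by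
      rw [Finset.sum_sub_distrib, hgeom m n (le_of_lt hmn), ← Finset.sum_div]
    have h3 : (∑ k ∈ Finset.Ico m n, (k:ℝ) ^ 2 * r ^ k) / N ≤ V / N := by
      gcongr
      exact sq_geom_sum_le hr0.le hr1 _
    linarith [h2 ▸ h1]
  constructor
  · -- lower bound
    have step1 : T * (1 - r) ≤ T / sawZ n r := by
      have e : T / (1 / (1 - r)) = T * (1 - r) := by
        rw [div_div_eq_mul_div, div_one]
      rw [← e]; gcongr
    have step2 : r ^ m - r ^ n - ε ≤ T * (1 - r) := by
      have h4 := mul_le_mul_of_nonneg_right hTlb h1r.le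
      have e : ((r ^ m - r ^ n) / (1 - r) - V / N) * (1 - r) = r ^ m - r ^ n - ε := by
        rw [hεV]; field_simp
      linarith [e ▸ h4]
    rw [hTail]; linarith
  · -- upper bound
    intro hδ
    set δ : ℝ := 1 - r ^ n - ε with hδdef
    have hZδ : δ / (1 - r) ≤ sawZ n r := by
      rw [div_le_iff₀ h1r]
      have h4 := mul_le_mul_of_nonneg_right hZlb h1r.le
      have e : ((1 - r ^ n) / (1 - r) - V / N) * (1 - r) = 1 - r ^ n - ε := by
        rw [hεV]; field_simp
      rw [hδdef]; linarith [e ▸ h4]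
    have hδ1r : 0 < δ / (1 - r) := div_pos hδ h1r
    rw [hTail]
    calc T / sawZ n r ≤ T / (δ / (1 - r)) := by gcongr
      _ ≤ ((r ^ m - r ^ n) / (1 - r)) / (δ / (1 - r)) := by gcongr
      _ = (r ^ m - r ^ n) / δ := by
          rw [div_div_div_comm, div_self (ne_of_gt h1r), div_one]
      _ ≤ r ^ m / δ := by
          gcongr <;> linarith [pow_nonneg hr0.le n]

theorem high_temp_window_exponential (α β : ℝ) (hα : 0 < α) (hβ1 : 0 < β) (hβ2 : β < 1 / 2)
    (y : ℝ) (hy : 0 ≤ y) :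
    Tendsto (fun n : ℕ => sawTail n (1 / (1 + α * (n : ℝ) ^ (-β))) (y * (n : ℝ) ^ β / α))
      atTop (nhds (Real.exp (-y))) := by
  -- abbreviations
  set s : ℕ → ℝ := fun n => α * (n:ℝ) ^ (-β) with hsdef
  set X : ℕ → ℝ := fun n => y * (n:ℝ) ^ β / α with hXdef
  set M : ℕ → ℕ := fun n => ⌊X n⌋₊ + 1 with hMdef
  have hs_pos : ∀ n : ℕ, 1 ≤ n → 0 < s n := by
    intro n hn
    have : (0:ℝ) < (n:ℝ) := by exact_mod_cast hn
    simp only [hsdef]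
    positivity
  have hs_le : ∀ n : ℕ, 1 ≤ n → s n ≤ α := by
    intro n hn
    have h1 : (1:ℝ) ≤ (n:ℝ) := by exact_mod_cast hn
    have : (n:ℝ) ^ (-β) ≤ 1 := by
      rw [Real.rpow_neg (by linarith)]
      rw [inv_le_one_iff₀]
      right
      exact Real.one_le_rpow h1 hβ1.le
    calc s n = α * (n:ℝ) ^ (-β) := rfl
      _ ≤ α * 1 := by nlinarith
      _ = α := mul_one α
  -- s → 0
  have hs0 : Tendsto s atTop (nhds 0) := by
    have h1 : Tendsto (fun x : ℝ => x ^ (-β)) atTop (nhds 0) := tendsto_rpow_neg_atTop hβ1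
    have h2 : Tendsto (fun n : ℕ => ((n:ℝ)) ^ (-β)) atTop (nhds 0) :=
      h1.comp tendsto_natCast_atTop_atTop
    have := h2.const_mul α
    simpa using this
  -- X * s = y for n ≥ 1
  have hXs : ∀ n : ℕ, 1 ≤ n → X n * s n = y := by
    intro n hn
    have hn0 : (0:ℝ) < (n:ℝ) := by exact_mod_cast hn
    have hbb : (n:ℝ) ^ β * (n:ℝ) ^ (-β) = 1 := by
      rw [← Real.rpow_add hn0]
      simp
    simp only [hXdef, hsdef]
    field_simp
    linear_combination y * hbb
  -- X ≥ 0
  have hX0 : ∀ n : ℕ, 0 ≤ X n := by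
    intro n
    have : (0:ℝ) ≤ (n:ℝ) ^ β := Real.rpow_nonneg (Nat.cast_nonneg n) β
    simp only [hXdef]
    positivity
  have hMX : ∀ n : ℕ, X n < M n ∧ (M n : ℝ) ≤ X n + 1 := by
    intro n
    constructor
    · simp only [hMdef]; push_cast
      exact Nat.lt_floor_add_one (X n)
    · simp only [hMdef]; push_cast
      have := Nat.floor_le (hX0 n)
      linarith
  -- eventually M n ≤ n/2 and M n < n
  have hhalf : ∀ᶠ n : ℕ in atTop, ((M n : ℝ) ≤ (n:ℝ)/2 ∧ M n < n) := by
    have h1 : Tendsto (fun n : ℕ => (n:ℝ)^β) atTop atTop :=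
      (tendsto_rpow_atTop hβ1).comp tendsto_natCast_atTop_atTop
    have h2 : Tendsto (fun n : ℕ => (n:ℝ)^((1:ℝ)-β)/2 - (y/α + 2)) atTop atTop := by
      apply tendsto_atTop_add_const_right
      exact ((tendsto_rpow_atTop (by linarith)).comp
        tendsto_natCast_atTop_atTop).atTop_div_const (by norm_num)
    have hD : Tendsto (fun n : ℕ => (n:ℝ)^β * ((n:ℝ)^((1:ℝ)-β)/2 - (y/α + 2))) atTop atTop :=
      h1.atTop_mul_atTop₀ h2
    filter_upwards [hD.eventually_ge_atTop 0, eventually_ge_atTop 1] with n hDn hn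
    have hn0 : (0:ℝ) < (n:ℝ) := by exact_mod_cast hn
    have hnb1 : (1:ℝ) ≤ (n:ℝ)^β := Real.one_le_rpow (by exact_mod_cast hn) hβ1.le
    have e : (n:ℝ)^β * (n:ℝ)^((1:ℝ)-β) = (n:ℝ) := by
      rw [← Real.rpow_add hn0]; norm_num
    have hkey : (n:ℝ)^β * (y/α) + 2*(n:ℝ)^β ≤ (n:ℝ)/2 := by nlinarith [hDn, e]
    have hXn : X n = (n:ℝ)^β * (y/α) := by
      simp only [hXdef]; field_simp
    have hMle : (M n : ℝ) ≤ (n:ℝ)/2 - 1 := by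
      have := (hMX n).2
      rw [hXn] at this
      nlinarith [hnb1]
    refine ⟨by linarith, ?_⟩
    have : (M n : ℝ) < (n:ℝ) := by linarith
    exact_mod_cast this
  -- powers of R tend to 0 for exponents w with w*s → ∞
  set R : ℕ → ℝ := fun n => 1/(1 + α * (n:ℝ)^(-β)) with hRdef
  have hRs : ∀ n : ℕ, R n = (1 + s n)⁻¹ := by intro n; simp [hRdef, hsdef, one_div]
  have hpow0 : ∀ w : ℕ → ℕ, Tendsto (fun n => ((w n : ℝ)) * s n) atTop atTop →
      Tendsto (fun n => R n ^ (w n)) atTop (nhds 0) := by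
    intro w hw
    have h1 : Tendsto (fun n => (1 + s n) ^ (w n)) atTop atTop := by
      apply tendsto_atTop_mono' atTop ?_ (tendsto_atTop_add_const_left atTop 1 hw)
      filter_upwards [eventually_ge_atTop 1] with n hn
      exact one_add_mul_le_pow (by linarith [hs_pos n hn]) (w n)
    have h2 := h1.inv_tendsto_atTop
    apply h2.congr
    intro n
    simp only [Pi.inv_apply]
    rw [hRs n, inv_pow]
  have hB : Tendsto (fun n : ℕ => R n ^ n) atTop (nhds 0) := by
    apply hpow0 (fun n => n)
    have hbase : Tendsto (fun n : ℕ => α * (n:ℝ)^((1:ℝ)-β)) atTop atTop :=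
      ((tendsto_rpow_atTop (by linarith)).comp tendsto_natCast_atTop_atTop).const_mul_atTop hα
    apply hbase.congr'
    filter_upwards [eventually_ge_atTop 1] with n hn
    have hn0 : (0:ℝ) < (n:ℝ) := by exact_mod_cast hn
    simp only [hsdef]
    rw [show ((1:ℝ)-β) = 1 + (-β) by ring, Real.rpow_add hn0, Real.rpow_one]
    ring
  -- A : R^M → exp(-y)
  have hA : Tendsto (fun n : ℕ => R n ^ (M n)) atTop (nhds (Real.exp (-y))) := by
    have hu : Tendsto (fun n : ℕ => (M n : ℝ) * Real.log (1 + s n)) atTop (nhds y) := by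
      have hlo : Tendsto (fun n : ℕ => y / (1 + s n)) atTop (nhds y) := by
        have : Tendsto (fun n : ℕ => 1 + s n) atTop (nhds 1) := by
          simpa using (tendsto_const_nhds (x := (1:ℝ)) (f := atTop)).add hs0
        have h := (tendsto_const_nhds (x := y) (f := atTop)).div this (by norm_num); rwa [div_one] at h
      have hhi : Tendsto (fun n : ℕ => y + s n) atTop (nhds y) := by
        simpa using (tendsto_const_nhds (x := y) (f := atTop)).add hs0
      apply tendsto_of_tendsto_of_tendsto_of_le_of_le' hlo hhi
      · filter_upwards [eventually_ge_atTop 1] with n hn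
        have hs' := hs_pos n hn
        have h1s : (0:ℝ) < 1 + s n := by linarith
        have hlog : 1 - (1 + s n)⁻¹ ≤ Real.log (1 + s n) := by
          have l1 : Real.log ((1 + s n)⁻¹) ≤ (1 + s n)⁻¹ - 1 :=
            Real.log_le_sub_one_of_pos (by positivity)
          rw [Real.log_inv] at l1
          linarith
        have hfrac : 1 - (1 + s n)⁻¹ = s n / (1 + s n) := by
          field_simp; ring
        have hXM : X n ≤ (M n : ℝ) := le_of_lt (hMX n).1
        have hlog0 : 0 ≤ Real.log (1 + s n) := by
          apply Real.log_nonneg; linarith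
        calc y / (1 + s n) = (X n * s n) / (1 + s n) := by rw [hXs n hn]
          _ = X n * (s n / (1 + s n)) := by ring
          _ ≤ (M n : ℝ) * (s n / (1 + s n)) := by
              apply mul_le_mul_of_nonneg_right hXM
              positivity
          _ = (M n : ℝ) * (1 - (1 + s n)⁻¹) := by rw [hfrac]
          _ ≤ (M n : ℝ) * Real.log (1 + s n) := by
              apply mul_le_mul_of_nonneg_left hlog
              positivity
      · filter_upwards [eventually_ge_atTop 1] with n hn
        have hs' := hs_pos n hn
        have hlog : Real.log (1 + s n) ≤ s n := by
          have := Real.log_le_sub_one_of_pos (show (0:ℝ) < 1 + s n by linarith)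
          linarith
        calc (M n : ℝ) * Real.log (1 + s n) ≤ (M n : ℝ) * s n := by
              apply mul_le_mul_of_nonneg_left hlog
              positivity
          _ ≤ (X n + 1) * s n := by
              apply mul_le_mul_of_nonneg_right (hMX n).2 hs'.le
          _ = X n * s n + s n := by ring
          _ = y + s n := by rw [hXs n hn]
    have hexp : Tendsto (fun n : ℕ => Real.exp (-((M n : ℝ) * Real.log (1 + s n))))
        atTop (nhds (Real.exp (-y))) := (Real.continuous_exp.tendsto _).comp hu.neg
    apply hexp.congr'
    filter_upwards [eventually_ge_atTop 1] with n hn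
    have hs' := hs_pos n hn
    have h1s : (0:ℝ) < 1 + s n := by linarith
    rw [hRs n, inv_pow, ← Real.exp_log (pow_pos h1s (M n)), Real.log_pow, ← Real.exp_neg]
  -- E → 0
  have hE : Tendsto (fun n : ℕ => 2 / ((n:ℝ) * (1 - R n)^2)) atTop (nhds 0) := by
    have hconst : Tendsto (fun n : ℕ => 2 * (1 + s n)^2 / α^2) atTop (nhds (2/α^2)) := by
      have h1 : Tendsto (fun n : ℕ => 1 + s n) atTop (nhds 1) := by
        simpa using (tendsto_const_nhds (x := (1:ℝ)) (f := atTop)).add hs0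
      have := ((h1.pow 2).const_mul 2).div_const (α^2)
      simpa using this
    have hr2 : Tendsto (fun n : ℕ => (n:ℝ)^(-((1:ℝ)-2*β))) atTop (nhds 0) :=
      (tendsto_rpow_neg_atTop (by linarith)).comp tendsto_natCast_atTop_atTop
    have hprod := hconst.mul hr2
    rw [mul_zero] at hprod
    apply hprod.congr'
    filter_upwards [eventually_ge_atTop 1] with n hn
    have hn0 : (0:ℝ) < (n:ℝ) := by exact_mod_cast hn
    have hs' := hs_pos n hn
    have h1s : (0:ℝ) < 1 + s n := by linarith
    have hnb : (0:ℝ) < (n:ℝ)^(-β) := Real.rpow_pos_of_pos hn0 _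
    have e : ∀ a b : ℝ, (n:ℝ)^a * (n:ℝ)^b = (n:ℝ)^(a+b) := fun a b => (Real.rpow_add hn0 a b).symm
    have hkey : (n:ℝ) * ((n:ℝ)^(-β))^2 * (n:ℝ)^(-((1:ℝ)-2*β)) = 1 := by
      calc (n:ℝ) * ((n:ℝ)^(-β))^2 * (n:ℝ)^(-((1:ℝ)-2*β))
          = (n:ℝ)^(1:ℝ) * ((n:ℝ)^(-β) * (n:ℝ)^(-β)) * (n:ℝ)^(-((1:ℝ)-2*β)) := by
            rw [Real.rpow_one, sq]
        _ = (n:ℝ)^((1:ℝ) + (-β + -β) + -((1:ℝ)-2*β)) := by rw [e, e, e]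
        _ = 1 := by
            rw [show (1:ℝ) + (-β + -β) + -((1:ℝ)-2*β) = 0 by ring, Real.rpow_zero]
    have hnc : (n:ℝ)^(-((1:ℝ)-2*β)) = ((n:ℝ)*((n:ℝ)^(-β))^2)⁻¹ :=
      eq_inv_of_mul_eq_one_right hkey
    have h1R : 1 - R n = s n / (1 + s n) := by
      rw [hRs n]; field_simp; ring
    rw [h1R, hnc]
    simp only [hsdef]
    have hne1 : (1:ℝ) + α * (n:ℝ)^(-β) ≠ 0 := by
      have := hs_pos n hn; simp only [hsdef] at this; positivity
    have hne2 : α ≠ 0 := ne_of_gt hα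
    have hne3 : (n:ℝ) ≠ 0 := ne_of_gt hn0
    have hne4 : (n:ℝ)^(-β) ≠ 0 := ne_of_gt hnb
    field_simp
  -- assemble the squeeze
  have hden : Tendsto (fun n : ℕ => 1 - R n ^ n - 2/((n:ℝ)*(1 - R n)^2)) atTop (nhds 1) := by
    have := ((tendsto_const_nhds (x := (1:ℝ)) (f := atTop (α := ℕ))).sub hB).sub hE
    simpa using this
  have hδpos : ∀ᶠ n : ℕ in atTop, 0 < 1 - R n ^ n - 2/((n:ℝ)*(1 - R n)^2) :=
    hden.eventually (lt_mem_nhds (show (0:ℝ) < 1 by norm_num))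
  have hlo : Tendsto (fun n : ℕ => R n ^ (M n) - R n ^ n - 2/((n:ℝ)*(1 - R n)^2))
      atTop (nhds (Real.exp (-y))) := by
    have := (hA.sub hB).sub hE
    simpa using this
  have hhi : Tendsto (fun n : ℕ => R n ^ (M n) / (1 - R n ^ n - 2/((n:ℝ)*(1 - R n)^2)))
      atTop (nhds (Real.exp (-y))) := by
    have := hA.div hden (by norm_num)
    rwa [div_one] at this
  have hR01 : ∀ n : ℕ, 1 ≤ n → 0 < R n ∧ R n < 1 := by
    intro n hn
    have hs' := hs_pos n hn
    constructor
    · rw [hRs n]; positivity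
    · rw [hRs n]
      rw [inv_lt_one_iff₀]
      right; linarith
  apply tendsto_of_tendsto_of_tendsto_of_le_of_le' hlo hhi
  · filter_upwards [hhalf, eventually_ge_atTop 1] with n hh hn
    exact (tail_sandwich n (M n) (R n) (X n) hn (hR01 n hn).1 (hR01 n hn).2 (hX0 n) rfl hh.2).1
  · filter_upwards [hhalf, eventually_ge_atTop 1, hδpos] with n hh hn hδ
    exact (tail_sandwich n (M n) (R n) (X n) hn (hR01 n hn).1 (hR01 n hn).2 (hX0 n) rfl hh.2).2 hδ
end
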